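/- Assume that the characteristic of k is different from 2. Then every irreducible representation ρ of G over k is a direct summand of an induced representation: there exist an irreducible H-representation σ and a G-subrepresentation of Ind_H^G σ which is isomorphic to ρ and admits a G-stable complement. -/

import Mathlib

universe u

variable {k : Type u} [Field k] {G : Type u} [Group G] (H : Subgroup G)

/-- The underlying space of the induced representation `Ind_H^G σ = k[G] ⊗_{k[H]} W`
(`H` of finite index): functions `f : G → W` with `f (x * h) = σ h⁻¹ (f x)` for `h ∈ H`.
For a finite-index subgroup this function model realizes the induced representation. -/
def indSupport {W : Type u} [AddCommGroup W] [Module k W]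
    (σ : Representation k H W) : Submodule k (G → W) where
  carrier := {f | ∀ (h : H) (x : G), f (x * (h : G)) = σ h⁻¹ (f x)}
  add_mem' := by
    intro a b ha hb h x
    simp only [Pi.add_apply, ha h x, hb h x, map_add]
  zero_mem' := by
    intro h x
    simp
  smul_mem' := by
    intro c f hf h x
    simp only [Pi.smul_apply, hf h x, map_smul]

/-- The action of `g : G` on the induced representation, by right translation. -/
def indAct {W : Type u} [AddCommGroup W] [Module k W]
    (σ : Representation k H W) (g : G) :
    indSupport H σ →ₗ[k] indSupport H σ where
  toFun f := ⟨fun x => (f : G → W) (g⁻¹ * x), by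
    intro h x
    simpa [mul_assoc] using f.2 h (g⁻¹ * x)⟩
  map_add' f₁ f₂ := rfl
  map_smul' c f := rfl

/-- The induced representation `Ind_H^G σ` of `σ : Representation k H W`. -/
def indRep {W : Type u} [AddCommGroup W] [Module k W]
    (σ : Representation k H W) : Representation k G ↥(indSupport H σ) where
  toFun := indAct H σ
  map_one' := by
    ext f x
    simp [indAct]
  map_mul' g₁ g₂ := by
    ext f x
    simp [indAct, mul_assoc]

section Aux

variable {k : Type u} [Field k] {G : Type u} [Group G] {H : Subgroup G}
variable {V : Type u} [AddCommGroup V] [Module k V]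

theorem auxRhoRho (ρ : Representation k G V) (a b : G) (v : V) :
    ρ a (ρ b v) = ρ (a * b) v := by
  rw [map_mul]; rfl

theorem auxMapMul (ρ : Representation k G V) (W₀ : Submodule k V) (x y : G) :
    W₀.map (ρ (x * y)) = (W₀.map (ρ y)).map (ρ x) := by
  rw [← Submodule.map_comp, ← Module.End.mul_eq_comp, ← map_mul]

theorem auxMapMem (ρ : Representation k G V) {W₀ : Submodule k V}
    (hst : ∀ h : H, ∀ v ∈ W₀, ρ (h : G) v ∈ W₀) {x : G} (hx : x ∈ H) :
    W₀.map (ρ x) = W₀ := by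
  apply le_antisymm
  · rintro v ⟨w, hw, rfl⟩; exact hst ⟨x, hx⟩ w hw
  · intro v hv
    refine ⟨ρ x⁻¹ v, hst ⟨x⁻¹, inv_mem hx⟩ v hv, ?_⟩
    rw [auxRhoRho, mul_inv_cancel, map_one, Module.End.one_apply]

theorem auxMapNotMem (ρ : Representation k G V) (hH : H.index = 2) {W₀ : Submodule k V}
    (hst : ∀ h : H, ∀ v ∈ W₀, ρ (h : G) v ∈ W₀) {g x : G} (hg : g ∉ H) (hx : x ∉ H) :
    W₀.map (ρ x) = W₀.map (ρ g) := by
  have h1 : g⁻¹ * x ∈ H := by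
    rw [Subgroup.mul_mem_iff_of_index_two hH, inv_mem_iff]
    simp [hg, hx]
  rw [show x = g * (g⁻¹ * x) by group, auxMapMul, auxMapMem ρ hst h1]

theorem auxStab (ρ : Representation k G V) (hH : H.index = 2) {W₀ : Submodule k V}
    (hst : ∀ h : H, ∀ v ∈ W₀, ρ (h : G) v ∈ W₀) {g : G} (hg : g ∉ H) (x : G) :
    (W₀.map (ρ x) = W₀ ∧ (W₀.map (ρ g)).map (ρ x) = W₀.map (ρ g)) ∨
    (W₀.map (ρ x) = W₀.map (ρ g) ∧ (W₀.map (ρ g)).map (ρ x) = W₀) := by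
  have hmg : (W₀.map (ρ g)).map (ρ x) = W₀.map (ρ (x * g)) := (auxMapMul ρ W₀ x g).symm
  by_cases hx : x ∈ H
  · left
    have hxg : x * g ∉ H := by
      rw [Subgroup.mul_mem_iff_of_index_two hH]
      intro h; exact hg (h.mp hx)
    exact ⟨auxMapMem ρ hst hx, by rw [hmg]; exact auxMapNotMem ρ hH hst hg hxg⟩
  · right
    have hxg : x * g ∈ H := by
      rw [Subgroup.mul_mem_iff_of_index_two hH]
      exact iff_of_false hx hg
    exact ⟨auxMapNotMem ρ hH hst hg hx, by rw [hmg]; exact auxMapMem ρ hst hxg⟩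

theorem auxBstab (ρ : Representation k G V) (hH : H.index = 2) {W₀ : Submodule k V}
    (hst : ∀ h : H, ∀ v ∈ W₀, ρ (h : G) v ∈ W₀) {g : G} (hg : g ∉ H) :
    ∀ h : H, ∀ v ∈ W₀.map (ρ g), ρ (h : G) v ∈ W₀.map (ρ g) := by
  intro h v hv
  have h1 : (h : G) * g ∉ H := by
    rw [Subgroup.mul_mem_iff_of_index_two hH]
    intro hiff; exact hg (hiff.mp h.2)
  have h2 : (W₀.map (ρ g)).map (ρ (h : G)) = W₀.map (ρ g) := by
    rw [← auxMapMul, auxMapNotMem ρ hH hst hg h1]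
  rw [← h2]
  exact Submodule.mem_map_of_mem hv

theorem auxInfStab (ρ : Representation k G V) (hH : H.index = 2) {A : Submodule k V}
    (hst : ∀ h : H, ∀ v ∈ A, ρ (h : G) v ∈ A) {g : G} (hg : g ∉ H) :
    ∀ x : G, ∀ v ∈ A ⊓ A.map (ρ g), ρ x v ∈ A ⊓ A.map (ρ g) := by
  intro x v hv
  rcases Submodule.mem_inf.mp hv with ⟨hv1, hv2⟩
  rcases auxStab ρ hH hst hg x with ⟨h1, h2⟩ | ⟨h1, h2⟩
  · refine Submodule.mem_inf.mpr ⟨?_, ?_⟩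
    · rw [← h1]; exact Submodule.mem_map_of_mem hv1
    · rw [← h2]; exact Submodule.mem_map_of_mem hv2
  · refine Submodule.mem_inf.mpr ⟨?_, ?_⟩
    · rw [← h2]; exact Submodule.mem_map_of_mem hv2
    · rw [← h1]; exact Submodule.mem_map_of_mem hv1

theorem auxSupStab (ρ : Representation k G V) (hH : H.index = 2) {A : Submodule k V}
    (hst : ∀ h : H, ∀ v ∈ A, ρ (h : G) v ∈ A) {g : G} (hg : g ∉ H) :
    ∀ x : G, ∀ v ∈ A ⊔ A.map (ρ g), ρ x v ∈ A ⊔ A.map (ρ g) := by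
  intro x v hv
  have hkey : (A ⊔ A.map (ρ g)).map (ρ x) = A ⊔ A.map (ρ g) := by
    rw [Submodule.map_sup]
    rcases auxStab ρ hH hst hg x with ⟨h1, h2⟩ | ⟨h1, h2⟩
    · rw [h1, h2]
    · rw [h1, h2, sup_comm]
  rw [← hkey]
  exact Submodule.mem_map_of_mem hv

theorem auxProj (ρ : Representation k G V) {A B : Submodule k V} (hc : IsCompl A B)
    (hA : ∀ h : H, ∀ v ∈ A, ρ (h : G) v ∈ A) (hB : ∀ h : H, ∀ v ∈ B, ρ (h : G) v ∈ B)
    (h : H) (v : V) :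
    (A.linearProjOfIsCompl B hc (ρ (h : G) v) : V) = ρ (h : G) (A.linearProjOfIsCompl B hc v) := by
  set p := A.linearProjOfIsCompl B hc with hp
  set q := B.linearProjOfIsCompl A hc.symm with hq
  have hv : (↑(p v) : V) + ↑(q v) = v :=
    Submodule.projection_add_projection_eq_self hc v
  have h1 : p (ρ (h : G) ↑(p v)) = ⟨ρ (h : G) ↑(p v), hA h _ (p v).2⟩ :=
    Submodule.linearProjOfIsCompl_apply_left hc ⟨ρ (h : G) ↑(p v), hA h _ (p v).2⟩
  have h2 : p (ρ (h : G) ↑(q v)) = 0 :=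
    Submodule.projectionOnto_apply_of_mem_right hc (hB h _ (q v).2)
  have h3 : ρ (h : G) v = ρ (h : G) ↑(p v) + ρ (h : G) ↑(q v) := by rw [← map_add, hv]
  rw [h3, map_add, h1, h2, add_zero]

/-- Restriction of a `G`-representation to an `H`-stable submodule. -/
def resRep (ρ : Representation k G V) {W₀ : Submodule k V}
    (hst : ∀ h : H, ∀ v ∈ W₀, ρ (h : G) v ∈ W₀) : Representation k H ↥W₀ where
  toFun h := (ρ (h : G)).restrict (hst h)
  map_one' := LinearMap.ext fun w => Subtype.ext (by
    show ρ (1 : G) ↑w = ↑w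
    rw [map_one, Module.End.one_apply])
  map_mul' h₁ h₂ := LinearMap.ext fun w => Subtype.ext (by
    show ρ ((h₁ * h₂ : H) : G) ↑w = ρ (h₁ : G) (ρ (h₂ : G) ↑w)
    rw [auxRhoRho]; rfl)

theorem resRep_apply (ρ : Representation k G V) {W₀ : Submodule k V}
    (hst : ∀ h : H, ∀ v ∈ W₀, ρ (h : G) v ∈ W₀) (h : H) (w : ↥W₀) :
    (resRep ρ hst h w : V) = ρ (h : G) ↑w := rfl

end Aux

section Aux2

variable {k : Type u} [Field k] {G : Type u} [Group G] (H : Subgroup G)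
variable {V : Type u} [AddCommGroup V] [Module k V]

/-- The canonical map `V → Ind_H^G (Res V)`. -/
def iotaA (ρ : Representation k G V) : V →ₗ[k] ↥(indSupport H (ρ.comp H.subtype)) where
  toFun v := ⟨fun x => ρ x⁻¹ v, by
    intro h x
    show ρ (x * (h : G))⁻¹ v = ρ ((h⁻¹ : H) : G) (ρ x⁻¹ v)
    rw [auxRhoRho, show (x * ((h : G)))⁻¹ = ((h⁻¹ : H) : G) * x⁻¹ by simp [mul_inv_rev]]⟩
  map_add' v w := Subtype.ext (funext fun x => by simp)
  map_smul' c v := Subtype.ext (funext fun x => by simp)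

/-- The canonical projection `Ind_H^G (Res V) → V`. -/
def piA (ρ : Representation k G V) (g₀ : G) :
    ↥(indSupport H (ρ.comp H.subtype)) →ₗ[k] V where
  toFun f := (f : G → V) 1 + ρ g₀ ((f : G → V) g₀)
  map_add' f₁ f₂ := by
    simp only [Submodule.coe_add, Pi.add_apply, map_add]
    abel
  map_smul' c f := by
    simp only [SetLike.val_smul, Pi.smul_apply, map_smul, RingHom.id_apply, smul_add]

/-- The canonical map `V → Ind_H^G σ` for `σ` the restriction to an `H`-stable
submodule `W₀` with `H`-stable complement `B`. -/
noncomputable def iotaB (ρ : Representation k G V) {W₀ B : Submodule k V}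
    (hst : ∀ h : H, ∀ v ∈ W₀, ρ (h : G) v ∈ W₀)
    (hBst : ∀ h : H, ∀ v ∈ B, ρ (h : G) v ∈ B)
    (hcompl : IsCompl W₀ B) :
    V →ₗ[k] ↥(indSupport H (resRep ρ hst)) where
  toFun v := ⟨fun x => W₀.linearProjOfIsCompl B hcompl (ρ x⁻¹ v), by
    intro h x
    refine Subtype.ext ?_
    show (W₀.linearProjOfIsCompl B hcompl (ρ (x * (h : G))⁻¹ v) : V)
        = ρ ((h⁻¹ : H) : G) (W₀.linearProjOfIsCompl B hcompl (ρ x⁻¹ v))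
    rw [← auxProj ρ hcompl hst hBst h⁻¹ (ρ x⁻¹ v), auxRhoRho,
      show (x * ((h : G)))⁻¹ = ((h⁻¹ : H) : G) * x⁻¹ by simp [mul_inv_rev]]⟩
  map_add' v w := Subtype.ext (funext fun x => by simp)
  map_smul' c v := Subtype.ext (funext fun x => by simp)

end Aux2

/-- Assume `char k ≠ 2`. Every irreducible representation `ρ` of `G` over
`k` is a direct summand of a representation induced from `H` (`H` normal of index 2):
there exist an irreducible `H`-representation `σ` and a `G`-subrepresentation of
`Ind_H^G σ` which is isomorphic to `ρ` and admits a `G`-stable complement. -/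
theorem statement6 [H.Normal] (hH : H.index = 2) (hchar : ringChar k ≠ 2)
    {V : Type u} [AddCommGroup V] [Module k V]
    (ρ : Representation k G V)
    (hirr : Nontrivial V ∧
      ∀ U : Submodule k V, (∀ g : G, ∀ v ∈ U, ρ g v ∈ U) → U = ⊥ ∨ U = ⊤) :
    ∃ (W : ModuleCat.{u} k) (σ : Representation k H ↥W),
      (Nontrivial ↥W ∧
        ∀ U : Submodule k ↥W, (∀ h : H, ∀ w ∈ U, σ h w ∈ U) → U = ⊥ ∨ U = ⊤) ∧
      ∃ U C : Submodule k ↥(indSupport H σ),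
        (∀ g : G, ∀ f ∈ U, indRep H σ g f ∈ U) ∧
        (∀ g : G, ∀ f ∈ C, indRep H σ g f ∈ C) ∧
        IsCompl U C ∧
        ∃ ι : V →ₗ[k] ↥(indSupport H σ), Function.Injective ι ∧
          LinearMap.range ι = U ∧
          ∀ (g : G) (v : V), ι (ρ g v) = indRep H σ g (ι v) := by
  classical
  obtain ⟨hnt, hirr2⟩ := hirr
  have htwo : (2 : k) ≠ 0 := Ring.two_ne_zero hchar
  have hHne : H ≠ ⊤ := by
    intro h
    rw [h, Subgroup.index_top] at hH
    norm_num at hH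
  obtain ⟨g₀, hg₀⟩ : ∃ g₀, g₀ ∉ H := by
    by_contra hcon
    push_neg at hcon
    exact hHne ((Subgroup.eq_top_iff' H).mpr hcon)
  by_cases hres : ∀ U : Submodule k V, (∀ h : H, ∀ v ∈ U, ρ (h : G) v ∈ U) → U = ⊥ ∨ U = ⊤
  · -- Case A : the restriction of `ρ` to `H` is irreducible
    have hιequi : ∀ (g' : G) (v : V),
        iotaA H ρ (ρ g' v) = indRep H (ρ.comp H.subtype) g' (iotaA H ρ v) := by
      intro g' v
      refine Subtype.ext (funext fun x => ?_)
      show ρ x⁻¹ (ρ g' v) = ρ (g'⁻¹ * x)⁻¹ v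
      rw [auxRhoRho, show (g'⁻¹ * x)⁻¹ = x⁻¹ * g' by group]
    have hπι : ∀ v : V, piA H ρ g₀ (iotaA H ρ v) = (2 : k) • v := by
      intro v
      show ρ (1 : G)⁻¹ v + ρ g₀ (ρ g₀⁻¹ v) = (2 : k) • v
      rw [inv_one, map_one, Module.End.one_apply, auxRhoRho, mul_inv_cancel, map_one,
        Module.End.one_apply, two_smul]
    have hπequi : ∀ (g' : G) (f : ↥(indSupport H (ρ.comp H.subtype))),
        piA H ρ g₀ (indRep H (ρ.comp H.subtype) g' f) = ρ g' (piA H ρ g₀ f) := by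
      intro g' f
      obtain ⟨f, hf⟩ := f
      have hf' : ∀ (h : H) (x : G), f (x * (h : G)) = ρ ((h⁻¹ : H) : G) (f x) := hf
      have hcosetA : ∀ x y : G, x⁻¹ * y ∈ H → f y = ρ (y⁻¹ * x) (f x) := by
        intro x y hxy
        have h : f (x * (x⁻¹ * y)) = ρ (((⟨x⁻¹ * y, hxy⟩ : H)⁻¹ : H) : G) (f x) :=
          hf' ⟨x⁻¹ * y, hxy⟩ x
        rw [show x * (x⁻¹ * y) = y by group] at h
        rw [h]
        have hc : (((⟨x⁻¹ * y, hxy⟩ : H)⁻¹ : H) : G) = y⁻¹ * x := by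
          show (x⁻¹ * y)⁻¹ = y⁻¹ * x
          group
        rw [hc]
      show f (g'⁻¹ * 1) + ρ g₀ (f (g'⁻¹ * g₀)) = ρ g' (f 1 + ρ g₀ (f g₀))
      rw [mul_one, map_add]
      by_cases hg' : g' ∈ H
      · have hm1 : (1 : G)⁻¹ * g'⁻¹ ∈ H := by simpa using inv_mem hg'
        have hm2 : g₀⁻¹ * (g'⁻¹ * g₀) ∈ H := by
          have := ‹H.Normal›.conj_mem _ (inv_mem hg') g₀⁻¹
          simpa [mul_assoc] using this
        rw [hcosetA 1 g'⁻¹ hm1, hcosetA g₀ (g'⁻¹ * g₀) hm2, auxRhoRho,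
          show (g'⁻¹)⁻¹ * 1 = g' by group,
          show g₀ * ((g'⁻¹ * g₀)⁻¹ * g₀) = g' * g₀ by group, ← auxRhoRho]
      · have hm1 : g₀⁻¹ * g'⁻¹ ∈ H := by
          rw [Subgroup.mul_mem_iff_of_index_two hH]
          exact iff_of_false (by simpa using hg₀) (by simpa using hg')
        have hm2 : (1 : G)⁻¹ * (g'⁻¹ * g₀) ∈ H := by
          rw [inv_one, one_mul, Subgroup.mul_mem_iff_of_index_two hH]
          exact iff_of_false (by simpa using hg') hg₀
        rw [hcosetA g₀ g'⁻¹ hm1, hcosetA 1 (g'⁻¹ * g₀) hm2, auxRhoRho,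
          show (g'⁻¹)⁻¹ * g₀ = g' * g₀ by group,
          show g₀ * ((g'⁻¹ * g₀)⁻¹ * 1) = g' by group, ← auxRhoRho, add_comm]
    refine ⟨ModuleCat.of k V, ρ.comp H.subtype, ⟨hnt, hres⟩,
      LinearMap.range (iotaA H ρ), LinearMap.ker (piA H ρ g₀), ?_, ?_, ?_, iotaA H ρ,
      ?_, rfl, hιequi⟩
    · show ∀ g' : G, ∀ f ∈ LinearMap.range (iotaA H ρ),
          indRep H (ρ.comp H.subtype) g' f ∈ LinearMap.range (iotaA H ρ)
      rintro g' f ⟨v, rfl⟩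
      exact ⟨ρ g' v, hιequi g' v⟩
    · show ∀ g' : G, ∀ f ∈ LinearMap.ker (piA H ρ g₀),
          indRep H (ρ.comp H.subtype) g' f ∈ LinearMap.ker (piA H ρ g₀)
      intro g' f hfk
      rw [LinearMap.mem_ker] at hfk ⊢
      rw [hπequi, hfk, map_zero]
    · show IsCompl (LinearMap.range (iotaA H ρ)) (LinearMap.ker (piA H ρ g₀))
      refine IsCompl.of_eq ?_ ?_
      · rw [eq_bot_iff]
        rintro f hfm
        obtain ⟨⟨v, rfl⟩, hf2⟩ := Submodule.mem_inf.mp hfm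
        rw [LinearMap.mem_ker, hπι] at hf2
        rcases smul_eq_zero.mp hf2 with h | h
        · exact absurd h htwo
        · simp [h]
      · rw [eq_top_iff]
        intro f _
        have hmem2 : f - iotaA H ρ ((2 : k)⁻¹ • piA H ρ g₀ f) ∈ LinearMap.ker (piA H ρ g₀) := by
          rw [LinearMap.mem_ker, map_sub, hπι, smul_smul, mul_inv_cancel₀ htwo, one_smul,
            sub_self]
        exact Submodule.mem_sup.mpr
          ⟨iotaA H ρ ((2 : k)⁻¹ • piA H ρ g₀ f), ⟨_, rfl⟩, _, hmem2, by abel⟩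
    · show Function.Injective (iotaA H ρ)
      intro v w hvw
      have h : ρ ((1 : G))⁻¹ v = ρ ((1 : G))⁻¹ w := congrFun (congrArg Subtype.val hvw) 1
      simpa using h
  · -- Case B : there is a proper nonzero `H`-stable submodule
    push_neg at hres
    obtain ⟨W₀, hst, hWbot, hWtop⟩ := hres
    have hBst := auxBstab ρ hH hst hg₀
    have hinfbot : W₀ ⊓ W₀.map (ρ g₀) = ⊥ := by
      rcases hirr2 (W₀ ⊓ W₀.map (ρ g₀)) (auxInfStab ρ hH hst hg₀) with h | h
      · exact h
      · exact absurd (top_le_iff.mp (h ▸ inf_le_left)) hWtop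
    have hsuptop : W₀ ⊔ W₀.map (ρ g₀) = ⊤ := by
      rcases hirr2 (W₀ ⊔ W₀.map (ρ g₀)) (auxSupStab ρ hH hst hg₀) with h | h
      · exact absurd (le_bot_iff.mp (h ▸ le_sup_left)) hWbot
      · exact h
    have hcompl : IsCompl W₀ (W₀.map (ρ g₀)) := IsCompl.of_eq hinfbot hsuptop
    have hpequi : ∀ (h : H) (v : V),
        (W₀.linearProjOfIsCompl _ hcompl (ρ (h : G) v) : V)
          = ρ (h : G) (W₀.linearProjOfIsCompl _ hcompl v) :=
      auxProj ρ hcompl hst hBst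
    have hpzero : ∀ w : V,
        W₀.linearProjOfIsCompl _ hcompl w = 0 ↔ w ∈ W₀.map (ρ g₀) := fun w =>
      Submodule.linearProjOfIsCompl_apply_eq_zero_iff hcompl
    have hιequi : ∀ (g' : G) (v : V),
        iotaB H ρ hst hBst hcompl (ρ g' v)
          = indRep H (resRep ρ hst) g' (iotaB H ρ hst hBst hcompl v) := by
      intro g' v
      refine Subtype.ext (funext fun x => ?_)
      show W₀.linearProjOfIsCompl _ hcompl (ρ x⁻¹ (ρ g' v))
          = W₀.linearProjOfIsCompl _ hcompl (ρ (g'⁻¹ * x)⁻¹ v)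
      rw [auxRhoRho, show (g'⁻¹ * x)⁻¹ = x⁻¹ * g' by group]
    have hinj : Function.Injective (iotaB H ρ hst hBst hcompl) := by
      rw [← LinearMap.ker_eq_bot]
      rw [eq_bot_iff]
      intro v hv
      rw [LinearMap.mem_ker] at hv
      have h1 : W₀.linearProjOfIsCompl _ hcompl (ρ ((1 : G))⁻¹ v) = 0 :=
        congrFun (congrArg Subtype.val hv) 1
      have h2 : W₀.linearProjOfIsCompl _ hcompl (ρ g₀⁻¹ v) = 0 :=
        congrFun (congrArg Subtype.val hv) g₀
      have h1' : v ∈ W₀.map (ρ g₀) := by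
        rw [hpzero] at h1
        simpa using h1
      have h2' : ρ g₀⁻¹ v ∈ W₀.map (ρ g₀) := by rw [hpzero] at h2; exact h2
      have h3 : v ∈ W₀ := by
        have hm := Submodule.mem_map_of_mem (f := ρ g₀) h2'
        rw [← auxMapMul, auxMapMem ρ hst (Subgroup.mul_self_mem_of_index_two hH g₀)] at hm
        have : ρ g₀ (ρ g₀⁻¹ v) = v := by
          rw [auxRhoRho, mul_inv_cancel, map_one, Module.End.one_apply]
        rwa [this] at hm
      have : v ∈ W₀ ⊓ W₀.map (ρ g₀) := Submodule.mem_inf.mpr ⟨h3, h1'⟩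
      rw [hinfbot] at this
      simpa using this
    have hsurj : Function.Surjective (iotaB H ρ hst hBst hcompl) := by
      rintro ⟨f, hf⟩
      have hf' : ∀ (h : H) (x : G), f (x * (h : G)) = resRep ρ hst h⁻¹ (f x) := hf
      refine ⟨↑(f 1) + ρ g₀ ↑(f g₀), Subtype.ext (funext fun x => Subtype.ext ?_)⟩
      show (W₀.linearProjOfIsCompl _ hcompl (ρ x⁻¹ (↑(f 1) + ρ g₀ ↑(f g₀))) : V) = ↑(f x)
      rw [map_add, map_add, Submodule.coe_add]
      by_cases hx : x ∈ H
      · have hxi : x⁻¹ ∈ H := inv_mem hx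
        have t1 : (W₀.linearProjOfIsCompl _ hcompl (ρ x⁻¹ ↑(f 1)) : V) = ρ x⁻¹ ↑(f 1) := by
          have h5 := hpequi ⟨x⁻¹, hxi⟩ ↑(f 1)
          unfold Submodule.linearProjOfIsCompl at h5
          rw [Submodule.projectionOnto_apply_left hcompl (f 1)] at h5
          exact h5
        have hx2 : x⁻¹ * g₀ ∉ H := by
          rw [Subgroup.mul_mem_iff_of_index_two hH]
          intro hiff; exact hg₀ (hiff.mp hxi)
        have t2 : (W₀.linearProjOfIsCompl _ hcompl (ρ x⁻¹ (ρ g₀ ↑(f g₀))) : V) = 0 := by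
          have h6 : ρ (x⁻¹ * g₀) ↑(f g₀) ∈ W₀.map (ρ (x⁻¹ * g₀)) :=
            Submodule.mem_map_of_mem (f g₀).2
          rw [auxMapNotMem ρ hH hst hg₀ hx2] at h6
          rw [auxRhoRho, (hpzero _).mpr h6]
          rfl
        have t3 : (↑(f x) : V) = ρ x⁻¹ ↑(f 1) := by
          have h4 : f (1 * x) = resRep ρ hst (⟨x, hx⟩ : H)⁻¹ (f 1) := hf' ⟨x, hx⟩ 1
          rw [one_mul] at h4
          rw [h4, resRep_apply]
          rfl
        rw [t1, t2, t3, add_zero]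
      · have hxi : x⁻¹ ∉ H := fun hmem => hx (by simpa using inv_mem hmem)
        have t1 : (W₀.linearProjOfIsCompl _ hcompl (ρ x⁻¹ ↑(f 1)) : V) = 0 := by
          have h6 : ρ x⁻¹ ↑(f 1) ∈ W₀.map (ρ x⁻¹) := Submodule.mem_map_of_mem (f 1).2
          rw [auxMapNotMem ρ hH hst hg₀ hxi] at h6
          rw [(hpzero _).mpr h6]
          rfl
        have hxg : x⁻¹ * g₀ ∈ H := by
          rw [Subgroup.mul_mem_iff_of_index_two hH]
          exact iff_of_false hxi hg₀
        have t2 : (W₀.linearProjOfIsCompl _ hcompl (ρ x⁻¹ (ρ g₀ ↑(f g₀))) : V)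
            = ρ (x⁻¹ * g₀) ↑(f g₀) := by
          rw [auxRhoRho]
          have h5 := hpequi ⟨x⁻¹ * g₀, hxg⟩ ↑(f g₀)
          unfold Submodule.linearProjOfIsCompl at h5
          rw [Submodule.projectionOnto_apply_left hcompl (f g₀)] at h5
          exact h5
        have t3 : (↑(f x) : V) = ρ (x⁻¹ * g₀) ↑(f g₀) := by
          have hgx : g₀⁻¹ * x ∈ H := by
            rw [Subgroup.mul_mem_iff_of_index_two hH]
            exact iff_of_false (fun hm => hg₀ (by simpa using inv_mem hm)) hx
          have h4 : f (g₀ * (g₀⁻¹ * x)) = resRep ρ hst (⟨g₀⁻¹ * x, hgx⟩ : H)⁻¹ (f g₀) :=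
            hf' ⟨g₀⁻¹ * x, hgx⟩ g₀
          rw [show g₀ * (g₀⁻¹ * x) = x by group] at h4
          rw [h4, resRep_apply]
          show ρ ((g₀⁻¹ * x)⁻¹) ↑(f g₀) = ρ (x⁻¹ * g₀) ↑(f g₀)
          rw [show (g₀⁻¹ * x)⁻¹ = x⁻¹ * g₀ by group]
        rw [t1, t2, t3, zero_add]
    refine ⟨ModuleCat.of k ↥W₀, resRep ρ hst, ⟨?_, ?_⟩, ⊤, ⊥,
      fun _ _ _ => trivial, ?_, isCompl_top_bot, iotaB H ρ hst hBst hcompl, hinj, ?_, hιequi⟩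
    · exact Submodule.nontrivial_iff_ne_bot.mpr hWbot
    · show ∀ U : Submodule k ↥W₀,
        (∀ h : H, ∀ w ∈ U, resRep ρ hst h w ∈ U) → U = ⊥ ∨ U = ⊤
      intro U hUst
      have hAle : U.map W₀.subtype ≤ W₀ := by
        rintro v ⟨u, hu, rfl⟩; exact u.2
      have hAst : ∀ h : H, ∀ v ∈ U.map W₀.subtype, ρ (h : G) v ∈ U.map W₀.subtype := by
        rintro h v ⟨u, hu, rfl⟩
        exact ⟨resRep ρ hst h u, hUst h u hu, (resRep_apply ρ hst h u).symm⟩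
      rcases hirr2 (U.map W₀.subtype ⊔ (U.map W₀.subtype).map (ρ g₀))
        (auxSupStab ρ hH hAst hg₀) with hS | hS
      · left
        have hAbot : U.map W₀.subtype = ⊥ := le_bot_iff.mp (le_sup_left.trans hS.le)
        rw [eq_bot_iff]
        intro u hu
        have hub : (↑u : V) ∈ (⊥ : Submodule k V) := hAbot ▸ ⟨u, hu, rfl⟩
        have : (↑u : V) = 0 := hub
        exact (Submodule.mem_bot k).mpr (Subtype.ext this)
      · right
        have h2 : (U.map W₀.subtype).map (ρ g₀) ⊓ W₀ = ⊥ := by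
          rw [eq_bot_iff, ← hinfbot]
          refine le_trans (inf_le_inf_right _ (Submodule.map_mono hAle)) ?_
          rw [inf_comm]
        have hWA : W₀ = U.map W₀.subtype := by
          calc W₀ = ⊤ ⊓ W₀ := (top_inf_eq W₀).symm
            _ = (U.map W₀.subtype ⊔ (U.map W₀.subtype).map (ρ g₀)) ⊓ W₀ := by rw [hS]
            _ = U.map W₀.subtype ⊔ ((U.map W₀.subtype).map (ρ g₀) ⊓ W₀) :=
                sup_inf_assoc_of_le _ hAle
            _ = U.map W₀.subtype := by rw [h2, sup_bot_eq]
        rw [eq_top_iff]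
        intro u _
        have hu2 : (↑u : V) ∈ U.map W₀.subtype := by rw [← hWA]; exact u.2
        obtain ⟨u', hu', hval⟩ := hu2
        have : u' = u := Subtype.ext hval
        exact this ▸ hu'
    · show ∀ g' : G, ∀ f ∈ (⊥ : Submodule k ↥(indSupport H (resRep ρ hst))),
          indRep H (resRep ρ hst) g' f ∈ (⊥ : Submodule k ↥(indSupport H (resRep ρ hst)))
      intro g' f hfb
      have : f = 0 := (Submodule.mem_bot k).mp hfb
      rw [this, map_zero]
      exact Submodule.zero_mem ⊥
    · show LinearMap.range (iotaB H ρ hst hBst hcompl) = ⊤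
      rw [LinearMap.range_eq_top]
      exact hsurj
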